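/- arXiv:2004.01474 — 16 statements merged into one kernel-verified Lean document; each statement's English description precedes it below -/
import Mathlib

section
/- Let R be a commutative ring with 1, S a multiplicatively closed subset of R, and M an R-module. Then M is an S-comultiplication module if and only if for each submodule N of M, there exists s ∈ S such that s • (0 :_M ann(N)) ⊆ N ⊆ (0 :_M ann(N)). -/
open Pointwise

/-- A multiplicatively closed set: `0 ∉ S`, `1 ∈ S`, closed under multiplication. -/
def IsMCS {R : Type*} [CommRing R] (S : Set R) : Prop :=
  (0 : R) ∉ S ∧ (1 : R) ∈ S ∧ ∀ s ∈ S, ∀ t ∈ S, s * t ∈ S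

/-- The submodule `(0 :_M I) = {m ∈ M : I • m = 0}`. -/
def resid (R M : Type*) [CommRing R] [AddCommGroup M] [Module R M] (I : Ideal R) :
    Submodule R M where
  carrier := {m | ∀ a ∈ I, a • m = 0}
  add_mem' := by
    intro x y hx hy a ha
    rw [smul_add, hx a ha, hy a ha, add_zero]
  zero_mem' := by
    intro a _
    rw [smul_zero]
  smul_mem' := by
    intro r x hx a ha
    rw [smul_comm, hx a ha, smul_zero]

/-- `M` is an `S`-comultiplication module: for each submodule `N` there exist `s ∈ S` and an
ideal `I` with `s • (0 :_M I) ⊆ N ⊆ (0 :_M I)`. -/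
def IsSComult (R M : Type*) [CommRing R] [AddCommGroup M] [Module R M] (S : Set R) : Prop :=
  ∀ N : Submodule R M, ∃ s ∈ S, ∃ I : Ideal R,
    (∀ m ∈ resid R M I, s • m ∈ N) ∧ N ≤ resid R M I

/-- `M` is a comultiplication module: every submodule `N` equals `(0 :_M ann N)`. -/
def IsComult (R M : Type*) [CommRing R] [AddCommGroup M] [Module R M] : Prop :=
  ∀ N : Submodule R M, N = resid R M N.annihilator

theorem stmt0 (R M : Type*) [CommRing R] [AddCommGroup M] [Module R M]
    (S : Set R) (hS : IsMCS S) :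
    IsSComult R M S ↔
      ∀ N : Submodule R M, ∃ s ∈ S,
        (∀ m ∈ resid R M N.annihilator, s • m ∈ N) ∧ N ≤ resid R M N.annihilator := by
  constructor
  · intro h N
    obtain ⟨s, hs, I, h1, h2⟩ := h N
    have hIann : I ≤ N.annihilator := by
      intro a ha
      rw [Submodule.mem_annihilator]
      intro n hn
      exact h2 hn a ha
    have hresle : resid R M N.annihilator ≤ resid R M I := by
      intro m hm a ha
      exact hm a (hIann ha)
    refine ⟨s, hs, fun m hm => h1 m (hresle hm), fun n hn a ha => ?_⟩
    rw [Submodule.mem_annihilator] at ha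
    exact ha n hn
  · intro h N
    obtain ⟨s, hs, h1, h2⟩ := h N
    exact ⟨s, hs, N.annihilator, h1, h2⟩
end

section
/- Let R be a commutative ring, S a multiplicatively closed subset, and M an R-module. Then M is an S-comultiplication module if and only if for all submodules K, N of M with ann(K) ⊆ ann(N), there exists s ∈ S such that s • N ⊆ K. -/
open Pointwise

theorem stmt1 (R M : Type*) [CommRing R] [AddCommGroup M] [Module R M]
    (S : Set R) (hS : IsMCS S) :
    IsSComult R M S ↔
      ∀ K N : Submodule R M, K.annihilator ≤ N.annihilator →
        ∃ s ∈ S, ∀ n ∈ N, s • n ∈ K := by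
  constructor
  · intro h K N hann
    obtain ⟨s, hs, I, h1, h2⟩ := h K
    refine ⟨s, hs, fun n hn => h1 n ?_⟩
    intro a ha
    have haK : a ∈ K.annihilator := Submodule.mem_annihilator.mpr fun m hm => h2 hm a ha
    exact Submodule.mem_annihilator.mp (hann haK) n hn
  · intro h N
    have hle : N.annihilator ≤ (resid R M N.annihilator).annihilator := by
      intro a ha
      exact Submodule.mem_annihilator.mpr fun m hm => hm a ha
    obtain ⟨s, hs, hsub⟩ := h N (resid R M N.annihilator) hle
    refine ⟨s, hs, N.annihilator, hsub, ?_⟩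
    intro n hn a ha
    exact Submodule.mem_annihilator.mp ha n hn
end

section
/- Let S be a multiplicatively closed subset of R with saturation S* = {x ∈ R : x divides some s ∈ S}. Then an R-module M is an S-comultiplication module if and only if M is an S*-comultiplication module. -/
open Pointwise

theorem stmt3 (R M : Type*) [CommRing R] [AddCommGroup M] [Module R M]
    (S : Set R) (hS : IsMCS S) :
    IsSComult R M S ↔ IsSComult R M {x : R | ∃ s ∈ S, x ∣ s} := by
  constructor
  · intro h N
    obtain ⟨s, hs, I, h1, h2⟩ := h N
    exact ⟨s, ⟨s, hs, dvd_refl s⟩, I, h1, h2⟩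
  · intro h N
    obtain ⟨x, ⟨s, hs, t, hst⟩, I, h1, h2⟩ := h N
    refine ⟨s, hs, I, ?_, h2⟩
    intro m hm
    rw [hst, mul_comm, mul_smul]
    exact Submodule.smul_mem N t (h1 m hm)
end

section
/- The ℤ-module ℤ is an S-comultiplication module for S = ℤ \ {0}, but ℤ is not a comultiplication ℤ-module. -/
open Pointwise

theorem stmt5 :
    IsSComult ℤ ℤ {n : ℤ | n ≠ 0} ∧ ¬ IsComult ℤ ℤ := by
  constructor
  · intro N
    obtain ⟨n, hn⟩ := IsPrincipalIdealRing.principal (N : Ideal ℤ)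
    by_cases h0 : n = 0
    · refine ⟨1, by simp, ⊤, ?_, ?_⟩
      · intro m hm
        have := hm 1 trivial
        simp at this
        simp [this]
      · intro x hx a _
        have : x = 0 := by
          rw [hn, h0] at hx
          simpa [Ideal.mem_span_singleton, zero_dvd_iff] using hx
        simp [this]
    · refine ⟨n, h0, ⊥, ?_, ?_⟩
      · intro m _
        rw [hn]
        exact Ideal.mem_span_singleton.mpr ⟨m, rfl⟩
      · intro x _ a ha
        simp at ha
        simp [ha]
  · intro h
    have := h (Ideal.span {2})
    have h1 : (1 : ℤ) ∈ resid ℤ ℤ (Ideal.span {(2:ℤ)}).annihilator := by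
      intro a ha
      rw [Submodule.mem_annihilator] at ha
      have h2 := ha 2 (Ideal.mem_span_singleton_self 2)
      simp only [smul_eq_mul] at h2
      have ha0 : a = 0 := by omega
      simp [ha0]
    rw [← this] at h1
    have := Ideal.mem_span_singleton.mp h1
    omega
end

section
/- Let S be a multiplicatively closed subset of R satisfying the maximal multiple condition. Then an R-module M is an S-comultiplication module if and only if the localization S⁻¹M is a comultiplication S⁻¹R-module. -/
open Pointwise

lemma mem_resid {R M : Type*} [CommRing R] [AddCommGroup M] [Module R M] {I : Ideal R}
    {m : M} : m ∈ resid R M I ↔ ∀ a ∈ I, a • m = 0 := Iff.rfl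

/-- If `W = resid J` for some ideal `J`, then `W = resid (ann W)`. -/
lemma eq_resid_ann {R M : Type*} [CommRing R] [AddCommGroup M] [Module R M]
    {W : Submodule R M} {J : Ideal R} (h : W = resid R M J) :
    W = resid R M W.annihilator := by
  apply le_antisymm
  · intro m hm a ha
    exact Submodule.mem_annihilator.mp ha m hm
  · intro m hm
    rw [h]
    intro a ha
    refine hm a (Submodule.mem_annihilator.mpr fun w hw => ?_)
    rw [h] at hw
    exact hw a ha

theorem stmt7 (R M : Type*) [CommRing R] [AddCommGroup M] [Module R M]
    (S : Submonoid R) (hS : IsMCS (S : Set R))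
    (hmax : ∃ s ∈ S, ∀ t ∈ S, t ∣ s) :
    IsSComult R M (S : Set R) ↔ IsComult (Localization S) (LocalizedModule S M) := by
  obtain ⟨s₀, hs₀, hdvd⟩ := hmax
  constructor
  · -- forward
    intro h W
    set N : Submodule R M :=
      (W.restrictScalars R).comap (LocalizedModule.mkLinearMap S M) with hN
    obtain ⟨s, hs, I, h1, h2⟩ := h N
    refine eq_resid_ann (J := I.map (algebraMap R (Localization S))) ?_
    apply le_antisymm
    · intro w hw
      rw [mem_resid]
      intro x hx
      rw [Ideal.map, Ideal.span] at hx
      induction hx using Submodule.span_induction with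
      | zero => simp
      | add x y hx hy ihx ihy => rw [add_smul, ihx, ihy, add_zero]
      | smul r x hx ih => rw [smul_eq_mul, mul_smul, ih, smul_zero]
      | mem x hmem =>
        obtain ⟨a, ha, rfl⟩ := hmem
        -- algebraMap a • w = a • w = 0
        have hw' := hw
        revert hw'
        induction w using LocalizedModule.induction_on with
        | h m t =>
          intro hwW
          have hm1 : LocalizedModule.mk m 1 ∈ W := by
            have : Localization.mk (t : R) (1 : S) • LocalizedModule.mk m t
                = LocalizedModule.mk m 1 := by
              rw [LocalizedModule.mk_smul_mk, one_mul]
              exact LocalizedModule.mk_cancel t m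
            rw [← this]
            exact W.smul_mem _ hwW
          have hmN : m ∈ N := hm1
          have := h2 hmN a ha
          rw [algebraMap_smul, LocalizedModule.smul'_mk, this, LocalizedModule.zero_mk]
    · intro w hw
      revert hw
      induction w using LocalizedModule.induction_on with
      | h m t =>
        intro hw
        have key : ∀ a ∈ I, a • (s₀ • m) = 0 := by
          intro a ha
          have := hw (algebraMap R (Localization S) a) (Ideal.mem_map_of_mem _ ha)
          rw [algebraMap_smul, LocalizedModule.smul'_mk, ← LocalizedModule.zero_mk (1 : S),
            LocalizedModule.mk_eq] at this
          obtain ⟨u, hu⟩ := this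
          simp only [one_smul, smul_zero] at hu
          rw [Submonoid.smul_def, smul_smul] at hu
          obtain ⟨c, hc⟩ := hdvd (u : R) u.2
          rw [smul_smul, show a * s₀ = c * ((u : R) * a) by rw [hc]; ring,
            mul_smul, hu, smul_zero]
        have hsN : s • (s₀ • m) ∈ N := h1 _ key
        have hmem : LocalizedModule.mk (s • s₀ • m) (1 : S) ∈ W := hsN
        have hss₀ : s * s₀ ∈ S := S.mul_mem hs hs₀
        have : Localization.mk 1 (t * ⟨s * s₀, hss₀⟩)
            • LocalizedModule.mk (s • s₀ • m) (1 : S) = LocalizedModule.mk m t := by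
          rw [LocalizedModule.mk_smul_mk, one_smul, mul_one]
          have : s • s₀ • m = (⟨s * s₀, hss₀⟩ : S) • m := by
            simp [Submonoid.smul_def, mul_smul]
          rw [this, LocalizedModule.mk_cancel_common_right]
        rw [← this]
        exact W.smul_mem _ hmem
  · -- backward
    intro h N
    refine ⟨s₀, hs₀, N.annihilator, ?_, fun n hn a ha => Submodule.mem_annihilator.mp ha n hn⟩
    -- the localized submodule W
    set W : Submodule (Localization S) (LocalizedModule S M) :=
      { carrier := {x | ∃ n ∈ N, ∃ t : S, x = LocalizedModule.mk n t}
        add_mem' := by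
          rintro x y ⟨n₁, hn₁, t₁, rfl⟩ ⟨n₂, hn₂, t₂, rfl⟩
          exact ⟨t₂ • n₁ + t₁ • n₂, N.add_mem (N.smul_mem _ hn₁) (N.smul_mem _ hn₂),
            t₁ * t₂, LocalizedModule.mk_add_mk⟩
        zero_mem' := ⟨0, N.zero_mem, 1, (LocalizedModule.zero_mk 1).symm⟩
        smul_mem' := by
          intro c x hx
          induction c using Localization.induction_on with
          | H y =>
            obtain ⟨n, hn, t, rfl⟩ := hx
            exact ⟨y.1 • n, N.smul_mem _ hn, y.2 * t,
              by rw [LocalizedModule.mk_smul_mk]⟩ }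
      with hW
    intro m hm
    have hmW : LocalizedModule.mk m (1 : S) ∈ W := by
      rw [h W]
      intro x hx
      revert hx
      induction x using Localization.induction_on with
      | H y =>
        intro hx
        obtain ⟨a, u⟩ := y
        -- show s₀ * a ∈ N.annihilator
        have hann : s₀ * a ∈ N.annihilator := by
          refine Submodule.mem_annihilator.mpr fun n hn => ?_
          have hnW : LocalizedModule.mk n (1 : S) ∈ W := ⟨n, hn, 1, rfl⟩
          have := Submodule.mem_annihilator.mp hx _ hnW
          rw [LocalizedModule.mk_smul_mk, ← LocalizedModule.zero_mk (1 : S),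
            LocalizedModule.mk_eq] at this
          obtain ⟨v, hv⟩ := this
          simp only [one_smul, smul_zero] at hv
          rw [Submonoid.smul_def, smul_smul] at hv
          obtain ⟨c, hc⟩ := hdvd (v : R) v.2
          rw [show s₀ * a = c * ((v : R) * a) by rw [hc]; ring,
            mul_smul, hv, smul_zero]
        have h0 : s₀ • (a • m) = 0 := by
          rw [smul_smul]
          exact hm _ hann
        rw [LocalizedModule.mk_smul_mk, ← LocalizedModule.zero_mk (1 : S),
          LocalizedModule.mk_eq]
        exact ⟨⟨s₀, hs₀⟩, by simp [Submonoid.smul_def, h0]⟩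
    obtain ⟨n, hn, t, ht⟩ := hmW
    rw [LocalizedModule.mk_eq] at ht
    obtain ⟨v, hv⟩ := ht
    simp only [one_smul] at hv
    -- hv : v • t • m = v • n  (a member of N)
    have hvtm : ((v : R) * t) • m ∈ N := by
      rw [mul_smul]
      rw [Submonoid.smul_def, Submonoid.smul_def] at hv
      rw [hv]
      exact N.smul_mem _ hn
    obtain ⟨c, hc⟩ := hdvd ((v : R) * t) (S.mul_mem v.2 t.2)
    rw [hc, mul_comm, mul_smul]
    exact N.smul_mem _ hvtm
end

section
/- Let f : M → M' be an R-module homomorphism with t • ker(f) = 0 for some t ∈ S. If M' is an S-comultiplication module, then M is an S-comultiplication module. -/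
open Pointwise

theorem stmt8 (R M M' : Type*) [CommRing R] [AddCommGroup M] [Module R M]
    [AddCommGroup M'] [Module R M'] (S : Set R) (hS : IsMCS S)
    (f : M →ₗ[R] M') (t : R) (ht : t ∈ S) (hker : ∀ x ∈ LinearMap.ker f, t • x = 0)
    (h : IsSComult R M' S) : IsSComult R M S := by
  intro N
  obtain ⟨s, hs, I, h1, h2⟩ := h (N.map f)
  refine ⟨t * (s * t), hS.2.2 t ht (s * t) (hS.2.2 s hs t ht), N.annihilator, ?_, ?_⟩
  · intro m hm
    have hIann : ∀ a ∈ I, t * a ∈ N.annihilator := by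
      intro a ha
      rw [Submodule.mem_annihilator]
      intro n hn
      have hfn : a • f n = 0 := h2 (Submodule.mem_map_of_mem hn) a ha
      have : a • n ∈ LinearMap.ker f := by
        rw [LinearMap.mem_ker, map_smul, hfn]
      have := hker _ this
      rw [mul_smul]
      exact this
    have hfm : f (t • m) ∈ resid R M' I := by
      intro a ha
      have hta : (t * a) • m = 0 := hm (t * a) (hIann a ha)
      calc a • f (t • m) = f ((t * a) • m) := by
            rw [map_smul, mul_smul, map_smul, map_smul, smul_comm]
        _ = 0 := by rw [hta, map_zero]
    obtain ⟨n, hn, heq⟩ := h1 _ hfm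
    have hkerel : (s * t) • m - n ∈ LinearMap.ker f := by
      rw [LinearMap.mem_ker, map_sub, map_smul, heq, map_smul, mul_smul, sub_self]
    have := hker _ hkerel
    have h3 : (t * (s * t)) • m = t • n := by
      rw [smul_sub, sub_eq_zero] at this
      rw [mul_smul]
      exact this
    rw [h3]
    exact N.smul_mem t hn
  · intro n hn a ha
    exact Submodule.mem_annihilator.mp ha n hn
end

section
/- Let f : M → M' be a surjective R-module homomorphism with t • ker(f) = 0 for some t ∈ S. If M is an S-comultiplication module, then M' is an S-comultiplication module. -/
open Pointwise

theorem stmt9 (R M M' : Type*) [CommRing R] [AddCommGroup M] [Module R M]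
    [AddCommGroup M'] [Module R M'] (S : Set R) (hS : IsMCS S)
    (f : M →ₗ[R] M') (hf : Function.Surjective f)
    (t : R) (ht : t ∈ S) (hker : ∀ x ∈ LinearMap.ker f, t • x = 0)
    (h : IsSComult R M S) : IsSComult R M' S := by
  intro N'
  obtain ⟨s, hs, I, h1, h2⟩ := h (N'.comap f)
  refine ⟨s * t, hS.2.2 s hs t ht, I, ?_, ?_⟩
  · intro m' hm'
    obtain ⟨m, rfl⟩ := hf m'
    have htm : t • m ∈ resid R M I := by
      intro a ha
      rw [smul_comm]
      apply hker
      rw [LinearMap.mem_ker, map_smul, hm' a ha]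
    have := h1 _ htm
    rw [Submodule.mem_comap, map_smul] at this
    rw [mul_smul, ← map_smul]
    exact this
  · intro m' hm' a ha
    obtain ⟨m, rfl⟩ := hf m'
    have hmN : m ∈ N'.comap f := hm'
    rw [← map_smul, h2 hmN a ha, map_zero]
end

section
/- Every submodule N of an S-comultiplication R-module M is itself an S-comultiplication R-module. -/
open Pointwise

theorem stmt10 (R M : Type*) [CommRing R] [AddCommGroup M] [Module R M]
    (S : Set R) (hS : IsMCS S) (N : Submodule R M)
    (h : IsSComult R M S) : IsSComult R N S := by
  intro K
  obtain ⟨s, hs, I, h1, h2⟩ := h (K.map N.subtype)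
  refine ⟨s, hs, I, ?_, ?_⟩
  · intro m hm
    have hmM : (m : M) ∈ resid R M I := by
      intro a ha
      have := congrArg (N.subtype) (hm a ha)
      simpa using this
    obtain ⟨k, hk, hke⟩ := h1 (m : M) hmM
    have : k = s • m := Subtype.ext (by simpa using hke)
    rwa [this] at hk
  · intro k hk a ha
    have : (k : M) ∈ resid R M I := h2 ⟨k, hk, rfl⟩
    exact Subtype.ext (by simpa using this a ha)
end

section
/- Let M₁ be an R₁-module, M₂ an R₂-module, S₁ ⊆ R₁ and S₂ ⊆ R₂ multiplicatively closed sets. Then M₁ × M₂ is an (S₁ × S₂)-comultiplication (R₁ × R₂)-module if and only if M₁ is an S₁-comultiplication R₁-module and M₂ is an S₂-comultiplication R₂-module. -/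
open Pointwise

theorem stmt12 (R₁ R₂ M₁ M₂ : Type*) [CommRing R₁] [CommRing R₂]
    [AddCommGroup M₁] [AddCommGroup M₂] [Module R₁ M₁] [Module R₂ M₂]
    (S₁ : Set R₁) (S₂ : Set R₂) (hS₁ : IsMCS S₁) (hS₂ : IsMCS S₂) :
    letI : Module (R₁ × R₂) M₁ := Module.compHom M₁ (RingHom.fst R₁ R₂)
    letI : Module (R₁ × R₂) M₂ := Module.compHom M₂ (RingHom.snd R₁ R₂)
    IsSComult (R₁ × R₂) (M₁ × M₂) (S₁ ×ˢ S₂) ↔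
      IsSComult R₁ M₁ S₁ ∧ IsSComult R₂ M₂ S₂ := by
  letI : Module (R₁ × R₂) M₁ := Module.compHom M₁ (RingHom.fst R₁ R₂)
  letI : Module (R₁ × R₂) M₂ := Module.compHom M₂ (RingHom.snd R₁ R₂)
  show IsSComult (R₁ × R₂) (M₁ × M₂) (S₁ ×ˢ S₂) ↔
      IsSComult R₁ M₁ S₁ ∧ IsSComult R₂ M₂ S₂
  have hsm₁ : ∀ (r : R₁ × R₂) (m : M₁), r • m = r.1 • m := fun _ _ => rfl
  have hsm₂ : ∀ (r : R₁ × R₂) (m : M₂), r • m = r.2 • m := fun _ _ => rfl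
  have hsmp : ∀ (r : R₁ × R₂) (p : M₁ × M₂), r • p = (r.1 • p.1, r.2 • p.2) := fun _ _ => rfl
  constructor
  · intro h
    constructor
    · -- M₁ is S₁-comultiplication
      intro N₁
      obtain ⟨s, hs, I, h1, h2⟩ := h
        { carrier := {p | p.1 ∈ N₁ ∧ p.2 = 0}
          add_mem' := fun ha hb => ⟨N₁.add_mem ha.1 hb.1, by simp [ha.2, hb.2]⟩
          zero_mem' := ⟨N₁.zero_mem, rfl⟩
          smul_mem' := fun r p hp =>
            ⟨by rw [hsmp]; exact N₁.smul_mem r.1 hp.1,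
             by rw [hsmp]; show r.2 • p.2 = 0; rw [hp.2, smul_zero]⟩ }
      rw [Set.mem_prod] at hs
      refine ⟨s.1, hs.1,
        { carrier := {a | (a, (0 : R₂)) ∈ I}
          add_mem' := fun {a b} ha hb => by
            have := I.add_mem ha hb
            simpa using this
          zero_mem' := I.zero_mem
          smul_mem' := fun r a ha => by
            have := I.mul_mem_left ((r, (0 : R₂)) : R₁ × R₂) ha
            simpa using this }, ?_, ?_⟩
      · intro m hm
        have hm' : ((m, 0) : M₁ × M₂) ∈ resid (R₁ × R₂) (M₁ × M₂) I := by
          intro a ha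
          have ha1 : ((a.1, (0 : R₂)) : R₁ × R₂) ∈ I := by
            have := I.mul_mem_left ((1 : R₁), (0 : R₂)) ha
            have e : (((1 : R₁), (0 : R₂)) : R₁ × R₂) * a = (a.1, 0) := by
              ext <;> simp
            rwa [e] at this
          have h0 : a.1 • m = 0 := hm a.1 ha1
          rw [hsmp]
          simp [h0]
        exact (h1 ((m, 0) : M₁ × M₂) hm').1
      · intro m hm a ha
        have := h2 (show ((m, (0 : M₂)) : M₁ × M₂) ∈ _ from ⟨hm, rfl⟩) ((a, (0 : R₂)) : R₁ × R₂) ha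
        rw [hsmp] at this
        exact congrArg Prod.fst this
    · -- M₂ is S₂-comultiplication
      intro N₂
      obtain ⟨s, hs, I, h1, h2⟩ := h
        { carrier := {p | p.1 = 0 ∧ p.2 ∈ N₂}
          add_mem' := fun ha hb => ⟨by simp [ha.1, hb.1], N₂.add_mem ha.2 hb.2⟩
          zero_mem' := ⟨rfl, N₂.zero_mem⟩
          smul_mem' := fun r p hp =>
            ⟨by rw [hsmp]; show r.1 • p.1 = 0; rw [hp.1, smul_zero],
             by rw [hsmp]; exact N₂.smul_mem r.2 hp.2⟩ }
      rw [Set.mem_prod] at hs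
      refine ⟨s.2, hs.2,
        { carrier := {a | ((0 : R₁), a) ∈ I}
          add_mem' := fun {a b} ha hb => by
            have := I.add_mem ha hb
            simpa using this
          zero_mem' := I.zero_mem
          smul_mem' := fun r a ha => by
            have := I.mul_mem_left (((0 : R₁), r) : R₁ × R₂) ha
            simpa using this }, ?_, ?_⟩
      · intro m hm
        have hm' : ((0, m) : M₁ × M₂) ∈ resid (R₁ × R₂) (M₁ × M₂) I := by
          intro a ha
          have ha2 : (((0 : R₁), a.2) : R₁ × R₂) ∈ I := by
            have := I.mul_mem_left ((0 : R₁), (1 : R₂)) ha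
            have e : (((0 : R₁), (1 : R₂)) : R₁ × R₂) * a = (0, a.2) := by
              ext <;> simp
            rwa [e] at this
          have h0 : a.2 • m = 0 := hm a.2 ha2
          rw [hsmp]
          simp [h0]
        exact (h1 ((0, m) : M₁ × M₂) hm').2
      · intro m hm a ha
        have := h2 (show (((0 : M₁), m) : M₁ × M₂) ∈ _ from ⟨rfl, hm⟩) (((0 : R₁), a) : R₁ × R₂) ha
        rw [hsmp] at this
        exact congrArg Prod.snd this
  · rintro ⟨h1, h2⟩ N
    have hsplit1 : ∀ p : M₁ × M₂, p ∈ N → ((p.1, 0) : M₁ × M₂) ∈ N := by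
      intro p hp
      have := N.smul_mem (((1 : R₁), (0 : R₂)) : R₁ × R₂) hp
      have e : (((1 : R₁), (0 : R₂)) : R₁ × R₂) • p = ((p.1, 0) : M₁ × M₂) := by
        rw [hsmp]; simp
      rwa [e] at this
    have hsplit2 : ∀ p : M₁ × M₂, p ∈ N → ((0, p.2) : M₁ × M₂) ∈ N := by
      intro p hp
      have := N.smul_mem (((0 : R₁), (1 : R₂)) : R₁ × R₂) hp
      have e : (((0 : R₁), (1 : R₂)) : R₁ × R₂) • p = ((0, p.2) : M₁ × M₂) := by
        rw [hsmp]; simp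
      rwa [e] at this
    set N₁ : Submodule R₁ M₁ :=
      { carrier := {m | ((m, 0) : M₁ × M₂) ∈ N}
        add_mem' := fun {a b} ha hb => by
          have := N.add_mem ha hb
          simpa using this
        zero_mem' := N.zero_mem
        smul_mem' := fun r m hm => by
          have := N.smul_mem ((r, (0 : R₂)) : R₁ × R₂) hm
          have e : ((r, (0 : R₂)) : R₁ × R₂) • ((m, 0) : M₁ × M₂) = ((r • m, 0) : M₁ × M₂) := by
            rw [hsmp]; simp
          rwa [e] at this } with hN₁
    set N₂ : Submodule R₂ M₂ :=
      { carrier := {m | ((0, m) : M₁ × M₂) ∈ N}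
        add_mem' := fun {a b} ha hb => by
          have := N.add_mem ha hb
          simpa using this
        zero_mem' := N.zero_mem
        smul_mem' := fun r m hm => by
          have := N.smul_mem (((0 : R₁), r) : R₁ × R₂) hm
          have e : (((0 : R₁), r) : R₁ × R₂) • ((0, m) : M₁ × M₂) = ((0, r • m) : M₁ × M₂) := by
            rw [hsmp]; simp
          rwa [e] at this } with hN₂
    obtain ⟨s₁, hs₁, I₁, ha₁, hb₁⟩ := h1 N₁
    obtain ⟨s₂, hs₂, I₂, ha₂, hb₂⟩ := h2 N₂
    refine ⟨(s₁, s₂), Set.mk_mem_prod hs₁ hs₂, I₁.prod I₂, ?_, ?_⟩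
    · intro m hm
      have hm1 : m.1 ∈ resid R₁ M₁ I₁ := by
        intro a ha
        have := hm ((a, (0 : R₂)) : R₁ × R₂) ((Ideal.mem_prod I₁ I₂).mpr ⟨ha, I₂.zero_mem⟩)
        rw [hsmp] at this
        exact congrArg Prod.fst this
      have hm2 : m.2 ∈ resid R₂ M₂ I₂ := by
        intro a ha
        have := hm (((0 : R₁), a) : R₁ × R₂) ((Ideal.mem_prod I₁ I₂).mpr ⟨I₁.zero_mem, ha⟩)
        rw [hsmp] at this
        exact congrArg Prod.snd this
      have k1 : ((s₁ • m.1, 0) : M₁ × M₂) ∈ N := ha₁ m.1 hm1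
      have k2 : ((0, s₂ • m.2) : M₁ × M₂) ∈ N := ha₂ m.2 hm2
      have := N.add_mem k1 k2
      have e : ((s₁ • m.1, 0) : M₁ × M₂) + ((0, s₂ • m.2) : M₁ × M₂)
          = ((s₁, s₂) : R₁ × R₂) • m := by
        rw [hsmp]; simp
      rwa [e] at this
    · intro p hp a ha
      obtain ⟨ha1, ha2⟩ := (Ideal.mem_prod I₁ I₂).mp (show (a.1, a.2) ∈ I₁.prod I₂ from ha)
      have e1 : a.1 • p.1 = 0 := hb₁ (hsplit1 p hp) a.1 ha1
      have e2 : a.2 • p.2 = 0 := hb₂ (hsplit2 p hp) a.2 ha2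
      rw [hsmp, e1, e2]
      rfl
end

section
/- An R-module M is a comultiplication module if and only if M is an (R \ 𝔪)-comultiplication module for every maximal ideal 𝔪 of R. -/
open Pointwise

theorem stmt13 (R M : Type*) [CommRing R] [AddCommGroup M] [Module R M] :
    IsComult R M ↔
      ∀ 𝔪 : Ideal R, 𝔪.IsMaximal → IsSComult R M ((𝔪 : Set R)ᶜ) := by
  constructor
  · intro h 𝔪 hm N
    refine ⟨1, ?_, N.annihilator, ?_, ?_⟩
    · exact fun h1 => hm.ne_top ((Ideal.eq_top_iff_one _).mpr h1)
    · intro x hx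
      rw [one_smul, h N]
      exact hx
    · rw [← h N]
  · intro h N
    have hle : N ≤ resid R M N.annihilator := fun n hn a ha =>
      (Submodule.mem_annihilator.mp ha) n hn
    refine le_antisymm hle ?_
    intro m hm
    have h1 : (1 : R) ∈ N.colon (Submodule.span R {m}) := by
      by_contra h1
      have hne : N.colon (Submodule.span R {m}) ≠ ⊤ := fun ht => h1 (ht ▸ Submodule.mem_top)
      obtain ⟨𝔪, hmax, hle'⟩ := Ideal.exists_le_maximal _ hne
      obtain ⟨s, hs, I, h1', h2'⟩ := h 𝔪 hmax N
      have hIann : I ≤ N.annihilator := by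
        intro a ha
        rw [Submodule.mem_annihilator]
        intro n hn
        exact h2' hn a ha
      have hmI : m ∈ resid R M I := fun a ha => hm a (hIann ha)
      have hsc : s ∈ N.colon (Submodule.span R {m}) :=
        Submodule.mem_colon_span_singleton.mpr (h1' m hmI)
      exact hs (hle' hsc)
    have := Submodule.mem_colon_span_singleton.mp h1
    rwa [one_smul] at this
end

section
/- Let M be an S-comultiplication R-module and I an ideal of R with (0 :_M I) = 0. Then there exists s ∈ S such that s • M ⊆ I • M, and moreover for every m ∈ M there exist s ∈ S and a ∈ I with s • m = a • m. -/
open Pointwise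

theorem stmt14 (R M : Type*) [CommRing R] [AddCommGroup M] [Module R M]
    (S : Set R) (hS : IsMCS S) (h : IsSComult R M S)
    (I : Ideal R) (hI : resid R M I = ⊥) :
    (∃ s ∈ S, ∀ m : M, s • m ∈ I • (⊤ : Submodule R M)) ∧
      ∀ m : M, ∃ s ∈ S, ∃ a ∈ I, s • m = a • m := by
  have key : ∀ (N : Submodule R M) (J : Ideal R), N ≤ resid R M J → ∀ m : M,
      (∀ a ∈ I, a • m ∈ N) → m ∈ resid R M J := by
    intro N J hNJ m hIN j hj
    have hjm : j • m ∈ resid R M I := by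
      intro a ha
      rw [smul_comm]
      exact hNJ (hIN a ha) j hj
    rw [hI] at hjm
    exact hjm
  constructor
  · obtain ⟨s, hs, J, h1, h2⟩ := h (I • (⊤ : Submodule R M))
    refine ⟨s, hs, fun m => h1 m ?_⟩
    exact key _ J h2 m (fun a ha => Submodule.smul_mem_smul ha trivial)
  · intro m
    obtain ⟨s, hs, J, h1, h2⟩ := h (I • Submodule.span R {m})
    have hm : s • m ∈ I • Submodule.span R {m} :=
      h1 m (key _ J h2 m (fun a ha => Submodule.smul_mem_smul ha
        (Submodule.mem_span_singleton_self m)))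
    rw [Submodule.mem_smul_span_singleton] at hm
    obtain ⟨a, ha, hae⟩ := hm
    exact ⟨s, hs, a, ha, hae.symm⟩
end

section
/- (S-Dual Nakayama's Lemma) Let S be a multiplicatively closed subset of R satisfying the maximal multiple condition and M an S-comultiplication R-module. Suppose I is an ideal of R such that t • I ⊆ Jac(R) for some t ∈ S. If (0 :_M (t • I)) = 0, then there exists s ∈ S with s • M = 0. -/
open Pointwise

lemma mem_resid_iff {R M : Type*} [CommRing R] [AddCommGroup M] [Module R M]
    (I : Ideal R) (m : M) : m ∈ resid R M I ↔ ∀ a ∈ I, a • m = 0 := Iff.rfl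

theorem stmt15 (R M : Type*) [CommRing R] [AddCommGroup M] [Module R M]
    (S : Set R) (hS : IsMCS S) (hmax : ∃ s ∈ S, ∀ t ∈ S, t ∣ s)
    (h : IsSComult R M S) (I : Ideal R) (t : R) (ht : t ∈ S)
    (htI : t • I ≤ (⊥ : Ideal R).jacobson)
    (h0 : resid R M (t • I) = ⊥) :
    ∃ s ∈ S, ∀ m : M, s • m = 0 := by
  obtain ⟨σ, hσS, hσ⟩ := hmax
  set J : Ideal R := t • I with hJ
  -- σ² ∈ S divides σ, so write σ = σ² * d and set e = σ * d, an idempotent with σ = σ * e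
  obtain ⟨d, hd⟩ := hσ (σ * σ) (hS.2.2 σ hσS σ hσS)
  set e : R := σ * d with he
  have hee : e * e = e := by
    have h' : σ * d * (σ * d) = (σ * σ * d) * d := by ring
    rw [he, h', ← hd]
  have hσe : σ * e = σ := by rw [he, ← mul_assoc, ← hd]
  -- key pointwise fact: for every m there is b ∈ J with σ • m = b • m
  have key : ∀ m : M, ∃ b ∈ J, σ • m = b • m := by
    intro m
    -- apply the S-comultiplication property to N = J • (R m)
    obtain ⟨s₀, hs₀S, K, hK1, hK2⟩ := h (Submodule.map (LinearMap.toSpanSingleton R M m) J)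
    -- m ∈ resid K
    have hmK : m ∈ resid R M K := by
      intro a ha
      -- a • m ∈ resid J = ⊥
      have : a • m ∈ resid R M J := by
        intro b hb
        have hbm : b • m ∈ Submodule.map (LinearMap.toSpanSingleton R M m) J :=
          Submodule.mem_map.mpr ⟨b, hb, rfl⟩
        have := hK2 hbm a ha
        calc b • a • m = a • b • m := smul_comm _ _ _
          _ = 0 := this
      rw [h0] at this
      simpa using this
    -- hence s₀ • m ∈ J • (R m)
    have hs₀m := hK1 m hmK
    obtain ⟨b₀, hb₀, hb₀m⟩ := Submodule.mem_map.mp hs₀m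
    simp only [LinearMap.toSpanSingleton_apply] at hb₀m
    -- σ = s₀ * c
    obtain ⟨c, hc⟩ := hσ s₀ hs₀S
    refine ⟨c * b₀, J.mul_mem_left c hb₀, ?_⟩
    rw [hc, mul_comm, mul_smul, ← hb₀m, ← mul_smul]
  refine ⟨σ, hσS, fun m => ?_⟩
  obtain ⟨b, hb, hbm⟩ := key m
  -- e • m = (d * b) • m
  have h1 : e • m = (d * b) • m := by
    rw [he, mul_comm σ d, mul_smul, hbm, mul_smul]
  -- e • m = (d * b) • (e • m)
  have h2 : e • m = (d * b) • (e • m) := by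
    conv_lhs => rw [← hee, mul_smul, h1, smul_comm]
  -- 1 - d * b is a unit
  have hdb : d * b ∈ (⊥ : Ideal R).jacobson := htI (J.mul_mem_left d hb)
  have hu : IsUnit (1 - d * b) := by
    have := Ideal.mem_jacobson_bot.mp hdb (-1)
    have heq : d * b * -1 + 1 = 1 - d * b := by ring
    rwa [heq] at this
  -- hence e • m = 0
  have h3 : (1 - d * b) • (e • m) = 0 := by
    rw [sub_smul, one_smul, ← h2, sub_self]
  have h4 : e • m = 0 := by
    obtain ⟨u, hu'⟩ := hu
    have h5 : ((u⁻¹ : Rˣ) : R) • ((1 - d * b) • (e • m)) = ((u⁻¹ : Rˣ) : R) • (0 : M) := by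
      rw [h3]
    rwa [smul_zero, ← mul_smul, ← hu', Units.inv_mul, one_smul] at h5
  -- conclude σ • m = σ • (e • m) = 0
  calc σ • m = (σ * e) • m := by rw [hσe]
    _ = σ • (e • m) := by rw [mul_smul]
    _ = 0 := by rw [h4, smul_zero]
end

section
/- (Dual Nakayama's Lemma) Let M be a comultiplication R-module and I an ideal of R with I ⊆ Jac(R). If (0 :_M I) = 0, then M = 0. -/
open Pointwise

theorem stmt16 (R M : Type*) [CommRing R] [AddCommGroup M] [Module R M]
    (h : IsComult R M) (I : Ideal R) (hI : I ≤ (⊥ : Ideal R).jacobson)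
    (h0 : resid R M I = ⊥) : ∀ m : M, m = 0 := by
  intro x
  set N : Submodule R M := I • Submodule.span R {x} with hN
  -- annihilator of N kills x
  have hann : ∀ a ∈ N.annihilator, a • x = 0 := by
    intro a ha
    have hax : a • x ∈ resid R M I := by
      intro i hi
      have hmem : i • x ∈ N := Submodule.smul_mem_smul hi (Submodule.mem_span_singleton_self x)
      have := (Submodule.mem_annihilator.mp ha) _ hmem
      rw [smul_comm] at this
      exact this
    rw [h0] at hax
    exact hax
  have hxN : x ∈ N := by
    rw [h N]
    exact hann
  have hle : Submodule.span R {x} ≤ I • Submodule.span R {x} := by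
    rw [Submodule.span_le]
    intro y hy
    rcases hy with rfl
    exact hxN
  have := Submodule.eq_bot_of_le_smul_of_le_jacobson_bot I (Submodule.span R {x})
    (Submodule.fg_span_singleton x) hle hI
  have : x ∈ (⊥ : Submodule R M) := this ▸ Submodule.mem_span_singleton_self x
  simpa using this
end

section
/- Every S-comultiplication R-module M is either S-cyclic (there exist s ∈ S and m ∈ M with s • M ⊆ R • m) or a torsion module (every element of M has nonzero annihilator). -/
open Pointwise

theorem stmt17 (R M : Type*) [CommRing R] [AddCommGroup M] [Module R M]
    (S : Set R) (hS : IsMCS S) (h : IsSComult R M S) :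
    (∃ s ∈ S, ∃ m : M, ∀ x : M, s • x ∈ Submodule.span R {m}) ∨
      ∀ m : M, ∃ r : R, r ≠ 0 ∧ r • m = 0 := by
  by_cases ht : ∀ m : M, ∃ r : R, r ≠ 0 ∧ r • m = 0
  · exact Or.inr ht
  · left
    push_neg at ht
    obtain ⟨m, hm⟩ := ht
    obtain ⟨s, hs, I, h1, h2⟩ := h (Submodule.span R {m})
    refine ⟨s, hs, m, fun x => ?_⟩
    apply h1
    intro a ha
    have hma : a • m = 0 := h2 (Submodule.mem_span_singleton_self m) a ha
    have ha0 : a = 0 := by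
      by_contra h0
      exact hm a h0 hma
    simp [ha0]
end

section
/- Every S-comultiplication module M that is S-torsion free is an S-cyclic module. -/
open Pointwise

theorem stmt18 (R M : Type*) [CommRing R] [AddCommGroup M] [Module R M]
    (S : Set R) (hS : IsMCS S) (h : IsSComult R M S)
    (htf : ∃ s ∈ S, ∀ (a : R) (m : M), a • m = 0 → s * a = 0 ∨ s • m = 0) :
    ∃ s ∈ S, ∃ m : M, ∀ x : M, s • x ∈ Submodule.span R {m} := by
  obtain ⟨s₁, hs₁S, hs₁⟩ := htf
  by_cases hall : ∀ m : M, s₁ • m = 0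
  · exact ⟨s₁, hs₁S, 0, fun x => by
      rw [hall x]; exact Submodule.zero_mem _⟩
  · push_neg at hall
    obtain ⟨m, hm⟩ := hall
    obtain ⟨s₂, hs₂S, I, hI1, hI2⟩ := h (Submodule.span R {m})
    refine ⟨s₂ * s₁, hS.2.2 s₂ hs₂S s₁ hs₁S, m, fun x => ?_⟩
    have hIann : ∀ a ∈ I, s₁ * a = 0 := by
      intro a ha
      have ham : a • m = 0 := hI2 (Submodule.mem_span_singleton_self m) a ha
      rcases hs₁ a m ham with h1 | h1
      · exact h1
      · exact absurd h1 hm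
    have hres : s₁ • x ∈ resid R M I := by
      intro a ha
      rw [smul_comm, smul_smul]
      rw [hIann a ha, zero_smul]
    have := hI1 _ hres
    rwa [smul_smul] at this
end

section
/- Let M be an S-comultiplication R-module and N a submodule with ann(N) ∩ S = ∅. Then N is an S-second submodule of M if and only if ann(N) is an S-prime ideal of R and there exists s ∈ S with s • N ⊆ s' • N for every s' ∈ S. -/
open Pointwise

/-- `N` is an `S`-second submodule of `M`. -/
def IsSSecond {R M : Type*} [CommRing R] [AddCommGroup M] [Module R M]
    (S : Set R) (N : Submodule R M) : Prop :=
  (∀ s ∈ S, s ∉ N.annihilator) ∧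
    ∃ s ∈ S, ∀ r : R, (s * r) • N = (⊥ : Submodule R M) ∨ (s * r) • N = s • N

/-- `P` is an `S`-prime ideal of `R`. -/
def IsSPrimeIdeal {R : Type*} [CommRing R] (S : Set R) (P : Ideal R) : Prop :=
  (∀ s ∈ S, s ∉ P) ∧ ∃ s ∈ S, ∀ a b : R, a * b ∈ P → s * a ∈ P ∨ s * b ∈ P

section Aux

variable {R M : Type*} [CommRing R] [AddCommGroup M] [Module R M]

lemma psmul_eq_bot_iff (r : R) (N : Submodule R M) : r • N = ⊥ ↔ r ∈ N.annihilator := by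
  rw [Submodule.eq_bot_iff, Submodule.mem_annihilator]
  constructor
  · intro h n hn
    exact h _ (Submodule.smul_mem_pointwise_smul n r N hn)
  · intro h x hx
    obtain ⟨n, hn, rfl⟩ := hx
    exact h n hn

lemma psmul_mul_le (s r : R) (N : Submodule R M) : (s * r) • N ≤ s • N := by
  rw [mul_comm, mul_smul]
  exact Submodule.smul_le_self_of_tower r (s • N)

end Aux

theorem stmt19 (R M : Type*) [CommRing R] [AddCommGroup M] [Module R M]
    (S : Set R) (hS : IsMCS S) (h : IsSComult R M S)
    (N : Submodule R M) (hN : ∀ s ∈ S, s ∉ N.annihilator) :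
    IsSSecond S N ↔
      (IsSPrimeIdeal S N.annihilator ∧ ∃ s ∈ S, ∀ s' ∈ S, s • N ≤ s' • N) := by
  constructor
  · rintro ⟨-, s, hsS, hsec⟩
    constructor
    · refine ⟨hN, s, hsS, ?_⟩
      intro a b hab
      rcases hsec a with ha | ha
      · exact Or.inl ((psmul_eq_bot_iff _ _).mp ha)
      · rcases hsec b with hb | hb
        · exact Or.inr ((psmul_eq_bot_iff _ _).mp hb)
        · exfalso
          apply hN s hsS
          rw [← psmul_eq_bot_iff]
          have h1 : (s * (a * b)) • N = ⊥ := by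
            rw [mul_smul, (psmul_eq_bot_iff (a * b) N).mpr hab, Submodule.smul_bot']
          have h2 : (s * (a * b)) • N = s • N := by
            rw [show s * (a * b) = b * (s * a) by ring, mul_smul, ha, ← mul_smul,
              mul_comm b s, hb]
          rw [← h2, h1]
    · refine ⟨s, hsS, ?_⟩
      intro s' hs'
      rcases hsec s' with hb | hb
      · exact absurd ((psmul_eq_bot_iff _ _).mp hb) (hN _ (hS.2.2 s hsS s' hs'))
      · rw [← hb, mul_comm]
        exact psmul_mul_le s' s N
  · rintro ⟨⟨-, s₁, hs₁, hpr⟩, s₂, hs₂, hle⟩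
    refine ⟨hN, ?_⟩
    set s : R := s₁ * s₂ with hs_def
    have hsS : s ∈ S := hS.2.2 s₁ hs₁ s₂ hs₂
    -- weak S-second property with witness `s`
    have weak : ∀ a : R, (s * a) • N = ⊥ ∨ s • N ≤ a • N := by
      intro a
      obtain ⟨s₃, hs₃, I, hI1, hI2⟩ := h (a • N)
      have haI : ∀ c ∈ I, c * a ∈ N.annihilator := by
        intro c hc
        rw [Submodule.mem_annihilator]
        intro n hn
        rw [mul_smul]
        exact hI2 (Submodule.smul_mem_pointwise_smul n a N hn) c hc
      by_cases hra : s₁ * a ∈ N.annihilator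
      · left
        rw [psmul_eq_bot_iff, show s * a = s₂ * (s₁ * a) by ring]
        exact Ideal.mul_mem_left _ s₂ hra
      · right
        have hcI : ∀ c ∈ I, s₁ * c ∈ N.annihilator := fun c hc =>
          (hpr c a (haI c hc)).resolve_right hra
        have hs₁N : ∀ n ∈ N, s₁ • n ∈ resid R M I := by
          intro n hn c hc
          rw [← mul_smul, mul_comm c s₁]
          exact Submodule.mem_annihilator.mp (hcI c hc) n hn
        have h31 : (s₃ * s₁) • N ≤ a • N := by
          intro x hx
          obtain ⟨n, hn, rfl⟩ := hx
          show (s₃ * s₁) • n ∈ a • N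
          rw [mul_smul]
          exact hI1 _ (hs₁N n hn)
        have h2 : s₂ • N ≤ a • N := le_trans (hle _ (hS.2.2 s₃ hs₃ s₁ hs₁)) h31
        calc s • N = s₁ • (s₂ • N) := by rw [hs_def, mul_smul]
          _ ≤ s₁ • (a • N) := smul_mono_right s₁ h2
          _ = (a * s₁) • N := by rw [← mul_smul, mul_comm]
          _ ≤ a • N := psmul_mul_le a s₁ N
    refine ⟨s * s, hS.2.2 s hsS s hsS, ?_⟩
    intro a
    rcases weak (s * a) with hb | hb
    · left
      rw [show s * s * a = s * (s * a) by ring]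
      exact hb
    · right
      refine le_antisymm (psmul_mul_le (s * s) a N) ?_
      have key : (s * s) • N ≤ (s * (s * a)) • N :=
        calc (s * s) • N = s • (s • N) := mul_smul s s N
          _ ≤ s • ((s * a) • N) := smul_mono_right s hb
          _ = (s * (s * a)) • N := (mul_smul s (s * a) N).symm
      rwa [show s * (s * a) = s * s * a by ring] at key
end
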